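/- Let $K : \mathbb{R}^d \to \mathbb{R}$ satisfy $\lambda |y|^{-(d+s)} \le K(y) \le \Lambda |y|^{-(d+s)}$ with $0 < \lambda \le \Lambda$ and $s \in (0,1)$. Let $E \subset \mathbb{R}^d$ be a Borel set and $x \in \partial E$. Then there exist constants $C, \gamma > 0$, depending only on $d$, $s$, $\lambda$, and $\Lambda$, such that if $|E \cap B_r(x)| \le \gamma |B_r|$ for some $r > 0$, then $\int_{B_r(x) \setminus B_{r/2}(x)} \tilde\chi_E(y) K(x-y)\, dy \ge C r^{-s}$. -/

import Mathlib

open MeasureTheory Metric Filter Topology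
open scoped ENNReal

noncomputable def tchi {d : ℕ} (E : Set (EuclideanSpace ℝ (Fin d))) (y : EuclideanSpace ℝ (Fin d)) : ℝ :=
  Set.indicator Eᶜ (fun _ => (1:ℝ)) y - Set.indicator E (fun _ => (1:ℝ)) y

noncomputable def curvInt {d : ℕ} (K : EuclideanSpace ℝ (Fin d) → ℝ)
    (E : Set (EuclideanSpace ℝ (Fin d))) (x : EuclideanSpace ℝ (Fin d)) (ε : ℝ) : ℝ :=
  ∫ y in (ball x ε)ᶜ, tchi E y * K (x - y)

/-- The principal-value nonlocal mean curvature of `E` at `x` exists and equals `L ∈ [-∞,∞]`. -/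
def HasCurvE {d : ℕ} (K : EuclideanSpace ℝ (Fin d) → ℝ) (E : Set (EuclideanSpace ℝ (Fin d)))
    (x : EuclideanSpace ℝ (Fin d)) (L : EReal) : Prop :=
  Tendsto (fun ε => ((curvInt K E x ε : ℝ) : EReal)) (𝓝[>] (0:ℝ)) (𝓝 L)

/-- `λ |y|^{-(d+s)} ≤ K(y) ≤ Λ |y|^{-(d+s)}`. -/
def KernelBounds {d : ℕ} (K : EuclideanSpace ℝ (Fin d) → ℝ) (s lam Lam : ℝ) : Prop :=
  ∀ y : EuclideanSpace ℝ (Fin d), y ≠ 0 →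
    lam * ‖y‖ ^ (-((d:ℝ) + s)) ≤ K y ∧ K y ≤ Lam * ‖y‖ ^ (-((d:ℝ) + s))

/-- `E` is touched at `x` by an exterior ball. -/
def ExtBall {d : ℕ} (E : Set (EuclideanSpace ℝ (Fin d))) (x : EuclideanSpace ℝ (Fin d)) : Prop :=
  ∃ z ρ, 0 < ρ ∧ ball z ρ ⊆ Eᶜ ∧ x ∈ sphere z ρ

/-- `curv_{K,E} ≤ C₀` in `Ω` in the viscosity sense. -/
def ViscSubsol {d : ℕ} (K : EuclideanSpace ℝ (Fin d) → ℝ) (E : Set (EuclideanSpace ℝ (Fin d)))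
    (Ω : Set (EuclideanSpace ℝ (Fin d))) (C₀ : ℝ) : Prop :=
  ∀ x ∈ frontier E ∩ Ω, ExtBall E x → ∀ L : EReal, HasCurvE K E x L → L ≤ (C₀ : EReal)

/-- `curv_{K,E} ≥ C₀` in `Ω` in the viscosity sense. -/
def ViscSupersol {d : ℕ} (K : EuclideanSpace ℝ (Fin d) → ℝ) (E : Set (EuclideanSpace ℝ (Fin d)))
    (Ω : Set (EuclideanSpace ℝ (Fin d))) (C₀ : ℝ) : Prop :=
  ∀ x ∈ frontier E ∩ Ω, (∃ z ρ, 0 < ρ ∧ ball z ρ ⊆ E ∧ x ∈ sphere z ρ) →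
    ∀ L : EReal, HasCurvE K E x L → (C₀ : EReal) ≤ L

set_option maxHeartbeats 1000000 in
theorem stmt_8 (d : ℕ) (s lam Lam : ℝ) (hs : s ∈ Set.Ioo (0 : ℝ) 1)
    (hlam : 0 < lam) (hLam : lam ≤ Lam) :
    ∃ C γ : ℝ, 0 < C ∧ 0 < γ ∧
      ∀ (K : EuclideanSpace ℝ (Fin d) → ℝ), Measurable K →
        KernelBounds K s lam Lam →
      ∀ (E : Set (EuclideanSpace ℝ (Fin d))), MeasurableSet E →
      ∀ x ∈ frontier E, ∀ r : ℝ, 0 < r →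
        volume (E ∩ ball x r) ≤
          ENNReal.ofReal γ * volume (ball (0 : EuclideanSpace ℝ (Fin d)) r) →
        C * r ^ (-s) ≤ ∫ y in ball x r \ ball x (r / 2), tchi E y * K (x - y) := by
  rcases Nat.eq_zero_or_pos d with hd0 | hd
  · -- degenerate case d = 0 : the frontier of any set is empty
    subst hd0
    refine ⟨1, 1, one_pos, one_pos, ?_⟩
    intro K _ _ E _ x hx r hr _
    exfalso
    have hfr : frontier E = ∅ := by
      rcases E.eq_empty_or_nonempty with rfl | ⟨a, ha⟩
      · simp
      · have : E = Set.univ := by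
          ext b; simp only [Set.mem_univ, iff_true]
          rwa [Subsingleton.elim b a]
        simp [this]
    rw [hfr] at hx; exact hx
  · have hLam0 : 0 < Lam := lt_of_lt_of_le hlam hLam
    have hP : 0 < 1 - (1/2:ℝ)^d := by
      have : ((1:ℝ)/2)^d < 1 := pow_lt_one₀ (by norm_num) (by norm_num) hd.ne'
      linarith
    have hM : 0 < lam + Lam * (2:ℝ)^((d:ℝ)+1) := by positivity
    have hω : 0 < (volume (ball (0 : EuclideanSpace ℝ (Fin d)) 1)).toReal :=
      ENNReal.toReal_pos (ne_of_gt (measure_ball_pos _ _ one_pos)) measure_ball_lt_top.ne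
    set ω : ℝ := (volume (ball (0 : EuclideanSpace ℝ (Fin d)) 1)).toReal with hωdef
    refine ⟨ω * lam * (1-(1/2:ℝ)^d)/2,
        lam * (1-(1/2:ℝ)^d) / (2*(lam + Lam * (2:ℝ)^((d:ℝ)+1))), by positivity, by positivity, ?_⟩
    set γ : ℝ := lam * (1-(1/2:ℝ)^d) / (2*(lam + Lam * (2:ℝ)^((d:ℝ)+1))) with hγdef
    have hγ : 0 < γ := by positivity
    intro K hK hKB E hE x hx r hr hvol
    set t : ℝ := r ^ (-((d:ℝ)+s)) with htdef
    have ht : 0 < t := Real.rpow_pos_of_pos hr _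
    set b' : ℝ := Lam * (r/2) ^ (-((d:ℝ)+s)) with hbdef
    have hb'0 : 0 < b' := by
      have := Real.rpow_pos_of_pos (half_pos hr) (-((d:ℝ)+s)); positivity
    set A : Set (EuclideanSpace ℝ (Fin d)) := ball x r \ ball x (r/2) with hAdef
    have hA : MeasurableSet A := measurableSet_ball.diff measurableSet_ball
    have hAfin : volume A ≠ ⊤ :=
      ((measure_mono Set.diff_subset).trans_lt measure_ball_lt_top).ne
    -- pointwise norm facts on A
    have hmem : ∀ y ∈ A, r/2 ≤ ‖x - y‖ ∧ ‖x - y‖ < r ∧ x - y ≠ 0 := by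
      intro y hy
      have h1 : dist y x < r := mem_ball.1 hy.1
      have h2 : r/2 ≤ dist y x := not_lt.1 (fun h => hy.2 (mem_ball.2 h))
      have hnorm : dist y x = ‖x - y‖ := by rw [dist_comm, dist_eq_norm]
      rw [hnorm] at h1 h2
      refine ⟨h2, h1, ?_⟩
      intro h; rw [h, norm_zero] at h2; linarith
    have hKub : ∀ y ∈ A, K (x - y) ≤ b' ∧ 0 ≤ K (x - y) := by
      intro y hy
      obtain ⟨h1, h2, hne⟩ := hmem y hy
      obtain ⟨hlo, hhi⟩ := hKB (x - y) hne
      have hpow : ‖x - y‖ ^ (-((d:ℝ)+s)) ≤ (r/2) ^ (-((d:ℝ)+s)) :=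
        Real.rpow_le_rpow_of_nonpos (half_pos hr) h1 (by have := Nat.cast_nonneg (α := ℝ) d; linarith [hs.1])
      constructor
      · calc K (x - y) ≤ Lam * ‖x - y‖ ^ (-((d:ℝ)+s)) := hhi
          _ ≤ b' := by rw [hbdef]; nlinarith
      · have : 0 < lam * ‖x - y‖ ^ (-((d:ℝ)+s)) := by
          have : (0:ℝ) < ‖x - y‖ := by linarith
          have := Real.rpow_pos_of_pos this (-((d:ℝ)+s)); positivity
        linarith
    -- measurability / integrability
    have htchi : Measurable (tchi E) := by
      unfold tchi
      exact (Measurable.indicator measurable_const hE.compl).sub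
        (Measurable.indicator measurable_const hE)
    have htchi_bd : ∀ y, ‖tchi E y‖ ≤ 1 := by
      intro y; by_cases hy : y ∈ E <;> simp [tchi, Set.indicator, hy]
    have hfm : Measurable (fun y => tchi E y * K (x - y)) :=
      htchi.mul (hK.comp (measurable_const.sub measurable_id))
    have hfi : IntegrableOn (fun y => tchi E y * K (x - y)) A := by
      apply Measure.integrableOn_of_bounded hAfin hfm.aestronglyMeasurable (M := b')
      filter_upwards [ae_restrict_mem hA] with y hy
      obtain ⟨hub, hnn⟩ := hKub y hy
      rw [norm_mul]
      calc ‖tchi E y‖ * ‖K (x - y)‖ ≤ 1 * ‖K (x - y)‖ :=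
            mul_le_mul_of_nonneg_right (htchi_bd y) (norm_nonneg _)
        _ = K (x - y) := by rw [one_mul, Real.norm_eq_abs, abs_of_nonneg hnn]
        _ ≤ b' := hub
    have hci : IntegrableOn (fun _ : EuclideanSpace ℝ (Fin d) => (1:ℝ)) A :=
      integrableOn_const hAfin
    have hii : IntegrableOn (Set.indicator E (fun _ => (1:ℝ))) A := hci.indicator hE
    have hgi : IntegrableOn
        (fun y => lam * t - (lam * t + b') * Set.indicator E (fun _ => (1:ℝ)) y) A :=
      (integrableOn_const hAfin).sub (hii.const_mul _)
    -- pointwise comparison on A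
    have hfg : ∀ y ∈ A,
        lam * t - (lam * t + b') * Set.indicator E (fun _ => (1:ℝ)) y ≤ tchi E y * K (x - y) := by
      intro y hy
      obtain ⟨h1, h2, hne⟩ := hmem y hy
      obtain ⟨hlo, hhi⟩ := hKB (x - y) hne
      obtain ⟨hub, hnn⟩ := hKub y hy
      by_cases hyE : y ∈ E
      · simp only [tchi, Set.indicator, hyE, if_true, Set.mem_compl_iff, not_true, if_false]
        simp only [mul_one]
        nlinarith
      · simp only [tchi, Set.indicator, hyE, if_false, Set.mem_compl_iff, not_false_iff, if_true]
        simp only [mul_zero]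
        have hxy0 : (0:ℝ) < ‖x - y‖ := by linarith
        have hpow : r ^ (-((d:ℝ)+s)) ≤ ‖x - y‖ ^ (-((d:ℝ)+s)) :=
          Real.rpow_le_rpow_of_nonpos hxy0 h2.le (by have := Nat.cast_nonneg (α := ℝ) d; linarith [hs.1])
        rw [htdef]
        nlinarith
    have hmono := setIntegral_mono_on hgi hfi hA hfg
    -- value of the lower integral
    have hval : (∫ y in A, (lam * t - (lam * t + b') * Set.indicator E (fun _ => (1:ℝ)) y)) =
        lam * t * (volume A).toReal - (lam * t + b') * (volume (E ∩ A)).toReal := by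
      have h1 : Integrable (fun _ : EuclideanSpace ℝ (Fin d) => lam * t) (volume.restrict A) :=
        integrableOn_const hAfin
      rw [integral_sub h1 (hii.const_mul (lam * t + b')),
        setIntegral_const, integral_const_mul, setIntegral_indicator hE, setIntegral_const,
        Set.inter_comm A E]
      simp [smul_eq_mul, mul_comm, Measure.real]
    -- measure computations
    have hballr : ∀ ρ : ℝ, 0 < ρ → (volume (ball x ρ)).toReal = ρ^d * ω := by
      intro ρ hρ
      rw [Measure.addHaar_ball_of_pos _ _ hρ, finrank_euclideanSpace_fin, ENNReal.toReal_mul,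
        ENNReal.toReal_ofReal (by positivity)]
    have hV : (volume A).toReal = r^d * ω - (r/2)^d * ω := by
      rw [hAdef, measure_diff (ball_subset_ball (by linarith)) measurableSet_ball.nullMeasurableSet
        measure_ball_lt_top.ne,
        ENNReal.toReal_sub_of_le (measure_mono (ball_subset_ball (by linarith)))
          measure_ball_lt_top.ne, hballr r hr, hballr (r/2) (half_pos hr)]
    have hm0 : 0 ≤ (volume (E ∩ A)).toReal := ENNReal.toReal_nonneg
    have hm : (volume (E ∩ A)).toReal ≤ γ * (r^d * ω) := by
      have hle : volume (E ∩ A) ≤ ENNReal.ofReal γ *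
          (ENNReal.ofReal (r^d) * volume (ball (0 : EuclideanSpace ℝ (Fin d)) 1)) := by
        calc volume (E ∩ A) ≤ volume (E ∩ ball x r) :=
              measure_mono (Set.inter_subset_inter_right _ Set.diff_subset)
          _ ≤ ENNReal.ofReal γ * volume (ball (0 : EuclideanSpace ℝ (Fin d)) r) := hvol
          _ = _ := by rw [Measure.addHaar_ball_of_pos _ _ hr, finrank_euclideanSpace_fin]
      have hfin : ENNReal.ofReal γ *
          (ENNReal.ofReal (r^d) * volume (ball (0 : EuclideanSpace ℝ (Fin d)) 1)) ≠ ⊤ :=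
        ENNReal.mul_ne_top ENNReal.ofReal_ne_top
          (ENNReal.mul_ne_top ENNReal.ofReal_ne_top measure_ball_lt_top.ne)
      have := ENNReal.toReal_mono hfin hle
      rwa [ENNReal.toReal_mul, ENNReal.toReal_mul, ENNReal.toReal_ofReal hγ.le,
        ENNReal.toReal_ofReal (by positivity)] at this
    -- bound on b'
    have hb : b' ≤ Lam * ((2:ℝ)^((d:ℝ)+1) * t) := by
      have heq : (r/2:ℝ) ^ (-((d:ℝ)+s)) = t * (2:ℝ) ^ ((d:ℝ)+s) := by
        rw [htdef, Real.div_rpow hr.le (by norm_num),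
          Real.rpow_neg (by norm_num : (0:ℝ) ≤ 2) ((d:ℝ)+s), div_inv_eq_mul]
      have h2s : (2:ℝ)^((d:ℝ)+s) ≤ (2:ℝ)^((d:ℝ)+1) :=
        Real.rpow_le_rpow_of_exponent_le one_le_two (by linarith [hs.2.le])
      rw [hbdef, heq]
      calc Lam * (t * (2:ℝ)^((d:ℝ)+s)) ≤ Lam * (t * (2:ℝ)^((d:ℝ)+1)) :=
            mul_le_mul_of_nonneg_left (mul_le_mul_of_nonneg_left h2s ht.le) hLam0.le
        _ = Lam * ((2:ℝ)^((d:ℝ)+1) * t) := by ring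
    have hSM : lam * t + b' ≤ t * (lam + Lam * (2:ℝ)^((d:ℝ)+1)) := by
      have hexp : t * (lam + Lam * (2:ℝ)^((d:ℝ)+1)) = lam * t + Lam * ((2:ℝ)^((d:ℝ)+1) * t) := by
        ring
      linarith [hb]
    have hS0 : 0 ≤ lam * t + b' := by positivity
    have hSm : (lam * t + b') * (volume (E ∩ A)).toReal ≤
        t * (lam + Lam * (2:ℝ)^((d:ℝ)+1)) * (γ * (r^d * ω)) :=
      mul_le_mul hSM hm hm0 (by positivity)
    have hγM : γ * (lam + Lam * (2:ℝ)^((d:ℝ)+1)) = lam * (1-(1/2:ℝ)^d) / 2 := by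
      rw [hγdef]; field_simp
    have hc : t * (lam + Lam * (2:ℝ)^((d:ℝ)+1)) * (γ * (r^d * ω)) =
        t * r^d * ω * (lam * (1-(1/2:ℝ)^d) / 2) := by
      calc t * (lam + Lam * (2:ℝ)^((d:ℝ)+1)) * (γ * (r^d * ω))
          = t * r^d * ω * (γ * (lam + Lam * (2:ℝ)^((d:ℝ)+1))) := by ring
        _ = _ := by rw [hγM]
    have hts : t * r^d = r^(-s) := by
      rw [htdef, ← Real.rpow_natCast r d, ← Real.rpow_add hr]
      congr 1; ring
    have hrd2 : ((r/2):ℝ)^d = r^d * (1/2:ℝ)^d := by rw [← mul_pow, div_eq_mul_one_div]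
    calc ω * lam * (1-(1/2:ℝ)^d)/2 * r^(-s)
        = t * r^d * ω * (lam * (1-(1/2:ℝ)^d)/2) := by rw [← hts]; ring
      _ ≤ lam * t * (volume A).toReal - (lam * t + b') * (volume (E ∩ A)).toReal := by
          rw [hV, hrd2]
          have h1 := hSm
          rw [hc] at h1
          have hre : lam * t * (r^d * ω - r^d * (1/2:ℝ)^d * ω) =
              t * r^d * ω * (lam * (1-(1/2:ℝ)^d)/2) + t * r^d * ω * (lam * (1-(1/2:ℝ)^d)/2) := by
            ring
          linarith [h1, hre]
      _ = _ := hval.symm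
      _ ≤ _ := hmono
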